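/- Let f₁,…,f_m ∈ ℤ[x] with d = max_i deg(f_i) ≥ 1 and h = max_i height(f_i). If 1 belongs to the ideal generated by f₁,…,f_m in ℤ[x], then there exist h₁,…,h_m ∈ ℤ[x] with deg(h_i) ≤ 3d²(2h + log(d+1)) for every i, such that 1 = f₁h₁ + ⋯ + f_m h_m. -/

import Mathlib

open Polynomial

/-- The height of an integer polynomial: the natural logarithm of the maximum of the
absolute values of its coefficients (the height of 0 is 0, since `Real.log 0 = 0`). -/
noncomputable def polyHeight (f : Polynomial ℤ) : ℝ :=
  Real.log (((Finset.range (f.natDegree + 1)).sup fun k => (f.coeff k).natAbs : ℕ) : ℝ)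


lemma polyHeight_nonneg (f : Polynomial ℤ) : 0 ≤ polyHeight f := by
  unfold polyHeight
  rcases Nat.eq_zero_or_pos ((Finset.range (f.natDegree + 1)).sup fun k => (f.coeff k).natAbs) with h | h
  · simp [h]
  · apply Real.log_nonneg
    exact_mod_cast h

lemma coeff_le_exp_polyHeight {f : Polynomial ℤ} {h : ℝ} (hh : polyHeight f ≤ h) (k : ℕ) :
    |((f.coeff k : ℝ))| ≤ Real.exp h := by
  set N : ℕ := (Finset.range (f.natDegree + 1)).sup fun k => (f.coeff k).natAbs with hN
  have hcoeff : (f.coeff k).natAbs ≤ N := by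
    rcases le_or_gt k f.natDegree with hk | hk
    · exact Finset.le_sup (f := fun k => (f.coeff k).natAbs)
        (Finset.mem_range.2 (Nat.lt_succ_of_le hk))
    · simp [coeff_eq_zero_of_natDegree_lt hk]
  have h1 : |((f.coeff k : ℝ))| = ((f.coeff k).natAbs : ℝ) := by
    rw [← Int.cast_abs, Int.abs_eq_natAbs, Int.cast_natCast]
  rw [h1]
  rcases Nat.eq_zero_or_pos N with h0 | h0
  · have : (f.coeff k).natAbs = 0 := by omega
    simp [this, (Real.exp_pos h).le]
  · calc ((f.coeff k).natAbs : ℝ) ≤ (N : ℝ) := by exact_mod_cast hcoeff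
      _ = Real.exp (Real.log N) := by
          rw [Real.exp_log]; exact_mod_cast h0
      _ ≤ Real.exp h := Real.exp_le_exp.2 hh

open scoped RealInnerProductSpace in
lemma hadamard_ineq {n : ℕ} (A : Matrix (Fin n) (Fin n) ℝ) :
    |A.det| ≤ ∏ j, Real.sqrt (∑ i, (A i j) ^ 2) := by
  classical
  haveI : WellFoundedLT (Fin n) := inferInstance
  set f : Fin n → EuclideanSpace ℝ (Fin n) := fun j => (WithLp.equiv 2 (Fin n → ℝ)).symm (fun i => A i j) with hf
  have hcard : Module.finrank ℝ (EuclideanSpace ℝ (Fin n)) = Fintype.card (Fin n) := finrank_euclideanSpace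
  set onb : OrthonormalBasis (Fin n) ℝ (EuclideanSpace ℝ (Fin n)) := InnerProductSpace.gramSchmidtOrthonormalBasis hcard f with honb
  have hdet := InnerProductSpace.gramSchmidtOrthonormalBasis_det hcard f
  set e : OrthonormalBasis (Fin n) ℝ (EuclideanSpace ℝ (Fin n)) := EuclideanSpace.basisFun (Fin n) ℝ with he
  have hA : e.toBasis.toMatrix f = A := by
    ext i j
    rw [Module.Basis.toMatrix_apply, OrthonormalBasis.coe_toBasis_repr_apply]
    simp [he, hf, EuclideanSpace.basisFun_repr]
  have hsplit : e.toBasis.toMatrix f =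
      e.toBasis.toMatrix onb.toBasis * onb.toBasis.toMatrix f :=
    (Module.Basis.toMatrix_mul_toMatrix _ _ _).symm
  have h1 : |(e.toBasis.toMatrix onb.toBasis).det| = 1 := by
    have := OrthonormalBasis.det_to_matrix_orthonormalBasis_real e onb
    rw [Module.Basis.det_apply] at this
    rcases this with h | h <;> simp [h]
  have h2 : |(onb.toBasis.toMatrix f).det| ≤ ∏ j, ‖f j‖ := by
    rw [← Module.Basis.det_apply, hdet, Finset.abs_prod]
    apply Finset.prod_le_prod (fun i _ => abs_nonneg _)
    intro i _
    calc |⟪onb i, f i⟫| ≤ ‖onb i‖ * ‖f i‖ := abs_real_inner_le_norm _ _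
      _ = ‖f i‖ := by rw [onb.orthonormal.1 i, one_mul]
  have hnorm : ∀ j, ‖f j‖ = Real.sqrt (∑ i, (A i j) ^ 2) := by
    intro j
    rw [EuclideanSpace.norm_eq]
    congr 1
    apply Finset.sum_congr rfl
    intro i _
    rw [Real.norm_eq_abs, sq_abs]
    rfl
  calc |A.det| = |(e.toBasis.toMatrix f).det| := by rw [hA]
    _ = |(e.toBasis.toMatrix onb.toBasis).det| * |(onb.toBasis.toMatrix f).det| := by
        rw [hsplit, Matrix.det_mul, abs_mul]
    _ ≤ ∏ j, ‖f j‖ := by rw [h1, one_mul]; exact h2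
    _ = ∏ j, Real.sqrt (∑ i, (A i j) ^ 2) := by
        exact Finset.prod_congr rfl fun j _ => hnorm j

lemma bezout_field {K : Type*} [Field K] {m d : ℕ} (hd1 : 1 ≤ d) (F : Fin m → K[X])
    (hdeg : ∀ i, (F i).natDegree ≤ d)
    (h1 : (1 : K[X]) ∈ Ideal.span (Set.range F)) :
    ∃ v : Fin m → K[X], (∀ i, (v i).natDegree ≤ d - 1) ∧ ∑ i, F i * v i = 1 := by
  classical
  obtain ⟨c, hc⟩ := (Ideal.mem_span_range_iff_exists_fun).1 h1
  by_cases hall : ∀ i, F i = 0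
  · exfalso
    simp only [hall, mul_zero, Finset.sum_const_zero] at hc
    exact one_ne_zero hc.symm
  push_neg at hall
  obtain ⟨j, hj⟩ := hall
  set δ := (F j).natDegree with hδdef
  rcases Nat.eq_zero_or_pos δ with hδ | hδ
  · -- constant case
    have hFj : F j = C ((F j).coeff 0) := eq_C_of_natDegree_eq_zero hδ
    have hu : (F j).coeff 0 ≠ 0 := by
      intro h0; apply hj; rw [hFj, h0, map_zero]
    refine ⟨fun i => if i = j then C ((F j).coeff 0)⁻¹ else 0, ?_, ?_⟩
    · intro i
      by_cases hij : i = j <;> simp [hij]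
    · rw [Finset.sum_eq_single j]
      · beta_reduce
        rw [if_pos rfl]
        nth_rewrite 1 [hFj]
        rw [← C_mul, mul_inv_cancel₀ hu, C_1]
      · intro i _ hij; simp [hij]
      · intro habs; exact absurd (Finset.mem_univ j) habs
  · -- nonconstant case
    set L := (F j).leadingCoeff with hLdef
    have hL : L ≠ 0 := leadingCoeff_ne_zero.2 hj
    set Fm := F j * C L⁻¹ with hFm
    have hmonic : Fm.Monic := monic_mul_leadingCoeff_inv hj
    have hFm0 : Fm ≠ 0 := hmonic.ne_zero
    have hFmdeg : Fm.natDegree = δ := by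
      rw [hFm, natDegree_mul hj (by simpa using inv_ne_zero hL)]
      simp [hδdef]
    set r : Fin m → K[X] := fun i => c i %ₘ Fm with hr
    set q : Fin m → K[X] := fun i => c i /ₘ Fm with hq
    set vj : K[X] := c j + C L⁻¹ * ∑ i ∈ Finset.univ.erase j, q i * F i with hvj
    set v : Fin m → K[X] := fun i => if i = j then vj else r i with hv
    have hδd : δ ≤ d := hdeg j
    have hrdeg : ∀ i, (r i).natDegree ≤ δ - 1 := by
      intro i
      by_cases hri : r i = 0
      · simp [hri]
      · have hlt : (r i).degree < Fm.degree := degree_modByMonic_lt (c i) hmonic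
        have := natDegree_lt_natDegree hri hlt
        rw [hFmdeg] at this
        omega
    -- the key identity
    have hkey : ∑ i, F i * v i = 1 := by
      have h1' : ∑ i, F i * v i
          = F j * v j + ∑ i ∈ Finset.univ.erase j, F i * v i :=
        (Finset.add_sum_erase _ _ (Finset.mem_univ j)).symm
      have h2' : ∑ i ∈ Finset.univ.erase j, F i * v i
          = ∑ i ∈ Finset.univ.erase j, F i * r i := by
        apply Finset.sum_congr rfl
        intro i hi
        have hij : i ≠ j := (Finset.mem_erase.1 hi).1
        simp [hv, hij]
      have h3' : F j * v j = F j * c j + ∑ i ∈ Finset.univ.erase j, Fm * (q i * F i) := by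
        simp only [hv, if_pos rfl, hvj]
        rw [mul_add, Finset.mul_sum, Finset.mul_sum]
        refine congrArg (F j * c j + ·) ?_
        apply Finset.sum_congr rfl
        intro i _
        rw [hFm]; ring
      rw [h1', h2', h3']
      have h4' : F j * c j + ∑ i ∈ Finset.univ.erase j, Fm * (q i * F i)
            + ∑ i ∈ Finset.univ.erase j, F i * r i
          = F j * c j + ∑ i ∈ Finset.univ.erase j, (c i * F i) := by
        rw [add_assoc, ← Finset.sum_add_distrib]
        congr 1
        apply Finset.sum_congr rfl
        intro i _
        have := modByMonic_add_div (c i) Fm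
        -- c i %ₘ Fm + Fm * (c i /ₘ Fm) = c i
        calc Fm * (q i * F i) + F i * r i = (r i + Fm * q i) * F i := by rw [hq, hr]; ring
          _ = c i * F i := by rw [hr, hq, this]
      rw [h4']
      rw [← Finset.add_sum_erase _ (fun i => c i * F i) (Finset.mem_univ j)] at hc
      rw [mul_comm (F j) (c j)]
      exact hc
    refine ⟨v, ?_, hkey⟩
    intro i
    by_cases hij : i = j
    · subst hij
      -- bound the degree of v i = vj via the identity
      by_cases hvj0 : v i = 0
      · simp [hvj0]
      · have hFv : F i * v i = 1 - ∑ k ∈ Finset.univ.erase i, F k * r k := by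
          have h1' : ∑ k, F k * v k
              = F i * v i + ∑ k ∈ Finset.univ.erase i, F k * v k :=
            (Finset.add_sum_erase _ _ (Finset.mem_univ i)).symm
          have h2' : ∑ k ∈ Finset.univ.erase i, F k * v k
              = ∑ k ∈ Finset.univ.erase i, F k * r k := by
            apply Finset.sum_congr rfl
            intro k hk
            simp [hv, (Finset.mem_erase.1 hk).1]
          rw [hkey, h2'] at h1'
          linear_combination -h1'
        have hrhsdeg : (1 - ∑ k ∈ Finset.univ.erase i, F k * r k).natDegree ≤ d + (δ - 1) := by
          refine (natDegree_sub_le _ _).trans ?_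
          rw [natDegree_one]
          refine max_le (by omega) ?_
          refine (natDegree_sum_le_of_forall_le _ _ ?_)
          intro k _
          refine (natDegree_mul_le).trans ?_
          exact add_le_add (hdeg k) (hrdeg k)
        have hmul : (F i * v i).natDegree = δ + (v i).natDegree := by
          rw [natDegree_mul hj hvj0]
        rw [hFv] at hmul
        have := hrhsdeg
        omega
    · simp only [hv, if_neg hij]
      exact (hrdeg i).trans (by omega)

lemma lift_zmod {p : ℕ} [NeZero p] (q : Polynomial (ZMod p)) :
    ∃ q' : Polynomial ℤ, q'.natDegree ≤ q.natDegree ∧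
      q'.map (Int.castRingHom (ZMod p)) = q := by
  refine ⟨∑ e ∈ q.support, monomial e (((q.coeff e).val : ℤ)), ?_, ?_⟩
  · apply natDegree_sum_le_of_forall_le
    intro e he
    exact (natDegree_monomial_le _).trans (le_natDegree_of_mem_supp e he)
  · rw [Polynomial.map_sum]
    have heq : ∀ e ∈ q.support,
        (monomial e (((q.coeff e).val : ℤ))).map (Int.castRingHom (ZMod p))
          = monomial e (q.coeff e) := by
      intro e _
      rw [map_monomial]
      congr 1
      simp only [eq_intCast, Int.cast_natCast]
      exact ZMod.natCast_rightInverse (q.coeff e)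
    rw [Finset.sum_congr rfl heq, ← Polynomial.sum_def, Polynomial.sum_monomial_eq]

lemma prime_step {m d : ℕ} (hd1 : 1 ≤ d) (f : Fin m → Polynomial ℤ)
    (hd : ∀ i, (f i).natDegree ≤ d)
    (h1 : (1 : Polynomial ℤ) ∈ Ideal.span (Set.range f))
    (p : ℕ) (hp : p.Prime) :
    ∃ (v : Fin m → Polynomial ℤ) (w : Polynomial ℤ),
      (∀ i, (v i).natDegree ≤ d - 1) ∧ w.natDegree ≤ 2 * d - 1 ∧
      (1 : Polynomial ℤ) = ∑ i, f i * v i + (p : Polynomial ℤ) * w := by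
  classical
  haveI : Fact p.Prime := ⟨hp⟩
  haveI : NeZero p := ⟨hp.ne_zero⟩
  set φ := Int.castRingHom (ZMod p) with hφ
  set F : Fin m → Polynomial (ZMod p) := fun i => (f i).map φ with hF
  have h1' : (1 : Polynomial (ZMod p)) ∈ Ideal.span (Set.range F) := by
    have hmem := Ideal.mem_map_of_mem (Polynomial.mapRingHom φ) h1
    rw [Ideal.map_span, map_one] at hmem
    have himg : (Polynomial.mapRingHom φ) '' (Set.range f) = Set.range F := by
      rw [← Set.range_comp]
      rfl
    rwa [himg] at hmem
  obtain ⟨V, hVdeg, hV⟩ := bezout_field hd1 F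
    (fun i => natDegree_map_le.trans (hd i)) h1'
  choose v hvdeg hvmap using fun i => lift_zmod (V i)
  set S := ∑ i, f i * v i with hS
  have hmapS : S.map φ = 1 := by
    rw [hS, Polynomial.map_sum, ← hV]
    apply Finset.sum_congr rfl
    intro i _
    rw [Polynomial.map_mul, hvmap]
  have hdvd : ∀ k, (p : ℤ) ∣ (1 - S).coeff k := by
    intro k
    have hmap0 : ((1 : Polynomial ℤ) - S).map φ = 0 := by
      rw [Polynomial.map_sub, hmapS, Polynomial.map_one, sub_self]
    have : (((1 - S).coeff k : ℤ) : ZMod p) = 0 := by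
      have h' := congrArg (fun q => Polynomial.coeff q k) hmap0
      simp only [coeff_map, coeff_zero] at h'
      exact h'
    exact (ZMod.intCast_zmod_eq_zero_iff_dvd _ p).1 this
  set w : Polynomial ℤ := ∑ e ∈ (1 - S).support, monomial e ((1 - S).coeff e / p) with hw
  have hpw : (p : Polynomial ℤ) * w = 1 - S := by
    have hpC : (p : Polynomial ℤ) = C ((p : ℕ) : ℤ) := by
      rw [map_natCast C]
    rw [hpC, hw, Finset.mul_sum]
    have : ∀ e ∈ (1 - S).support,
        C ((p : ℕ) : ℤ) * monomial e ((1 - S).coeff e / p) = monomial e ((1 - S).coeff e) := by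
      intro e _
      rw [C_mul_monomial]
      congr 1
      exact Int.mul_ediv_cancel' (hdvd e)
    rw [Finset.sum_congr rfl this, ← Polynomial.sum_def, Polynomial.sum_monomial_eq]
  have hSdeg : S.natDegree ≤ 2 * d - 1 := by
    rw [hS]
    apply natDegree_sum_le_of_forall_le
    intro i _
    refine natDegree_mul_le.trans ?_
    have h1i := hd i
    have h2i := (hvdeg i).trans (hVdeg i)
    omega
  have hwdeg : w.natDegree ≤ 2 * d - 1 := by
    rw [hw]
    apply natDegree_sum_le_of_forall_le
    intro e he
    refine (natDegree_monomial_le _).trans ?_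
    refine (le_natDegree_of_mem_supp e he).trans ?_
    refine (natDegree_sub_le _ _).trans ?_
    simp only [natDegree_one]
    omega
  refine ⟨v, w, fun i => (hvdeg i).trans (hVdeg i), hwdeg, ?_⟩
  rw [hpw, ← hS]
  ring

lemma key_induction {m d : ℕ} (hd1 : 1 ≤ d) (f : Fin m → Polynomial ℤ)
    (hd : ∀ i, (f i).natDegree ≤ d)
    (h1 : (1 : Polynomial ℤ) ∈ Ideal.span (Set.range f)) :
    ∀ N : ℕ, 1 ≤ N → ∃ (g : Fin m → Polynomial ℤ) (w : Polynomial ℤ) (c : ℕ),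
      2 ^ c ≤ N ∧ (∀ i, (g i).natDegree ≤ (2 * d - 1) * c) ∧
      w.natDegree ≤ (2 * d - 1) * c ∧
      (1 : Polynomial ℤ) = ∑ i, f i * g i + (N : Polynomial ℤ) * w := by
  intro N
  induction N using Nat.strong_induction_on with
  | _ N IH =>
    intro hN
    rcases eq_or_lt_of_le hN with h1N | h2N
    · -- N = 1
      refine ⟨fun _ => 0, 1, 0, ?_, ?_, ?_, ?_⟩ <;>
        simp [← h1N]
    · -- N ≥ 2
      set p := N.minFac with hpdef
      have hp : p.Prime := Nat.minFac_prime (by omega)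
      have hpdvd : p ∣ N := Nat.minFac_dvd N
      set N' := N / p with hN'def
      have hNeq : N = p * N' := (Nat.mul_div_cancel' hpdvd).symm
      have hp2 : 2 ≤ p := hp.two_le
      have hN'1 : 1 ≤ N' := by
        rcases Nat.eq_zero_or_pos N' with h0 | h0
        · rw [h0, mul_zero] at hNeq; omega
        · exact h0
      have hN'lt : N' < N := by
        have h2' : 2 * N' ≤ p * N' := Nat.mul_le_mul_right _ hp2
        omega
      obtain ⟨g', w', c', hc', hg'deg, hw'deg, hrep'⟩ := IH N' hN'lt hN'1
      obtain ⟨v, w₁, hvdeg, hw₁deg, hrep₁⟩ := prime_step hd1 f hd h1 p hp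
      refine ⟨fun i => g' i + (N' : Polynomial ℤ) * w' * v i, w' * w₁, c' + 1, ?_, ?_, ?_, ?_⟩
      · calc 2 ^ (c' + 1) = 2 ^ c' * 2 := by ring
          _ ≤ N' * p := Nat.mul_le_mul hc' hp2
          _ = N := by rw [hNeq, mul_comm]
      · intro i
        refine (natDegree_add_le _ _).trans ?_
        refine max_le ((hg'deg i).trans (by nlinarith)) ?_
        refine natDegree_mul_le.trans ?_
        have h2 : ((N' : Polynomial ℤ) * w').natDegree ≤ (2 * d - 1) * c' := by
          refine natDegree_mul_le.trans ?_
          simpa [natDegree_natCast] using hw'deg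
        have h3 := hvdeg i
        have : d - 1 ≤ 2 * d - 1 := by omega
        calc ((N' : Polynomial ℤ) * w').natDegree + (v i).natDegree
            ≤ (2 * d - 1) * c' + (2 * d - 1) := by
              apply Nat.add_le_add h2 (h3.trans this)
          _ = (2 * d - 1) * (c' + 1) := by ring
      · refine natDegree_mul_le.trans ?_
        calc w'.natDegree + w₁.natDegree ≤ (2 * d - 1) * c' + (2 * d - 1) :=
              Nat.add_le_add hw'deg hw₁deg
          _ = (2 * d - 1) * (c' + 1) := by ring
      · have hcast : (N : Polynomial ℤ) = (p : Polynomial ℤ) * (N' : Polynomial ℤ) := by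
          rw [hNeq]; push_cast; ring
        calc (1 : Polynomial ℤ) = ∑ i, f i * g' i + (N' : Polynomial ℤ) * w' * 1 := by
              rw [mul_one]; exact hrep'
          _ = ∑ i, f i * g' i + (N' : Polynomial ℤ) * w' *
                (∑ i, f i * v i + (p : Polynomial ℤ) * w₁) := by rw [← hrep₁]
          _ = ∑ i, f i * (g' i + (N' : Polynomial ℤ) * w' * v i)
                + (N : Polynomial ℤ) * (w' * w₁) := by
              rw [hcast]
              have e1 : ∀ i ∈ Finset.univ, (N' : Polynomial ℤ) * w' * (f i * v i)
                  = f i * ((N' : Polynomial ℤ) * w' * v i) := fun i _ => by ring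
              have e2 : ∀ i ∈ Finset.univ, f i * (g' i + (N' : Polynomial ℤ) * w' * v i)
                  = f i * g' i + f i * ((N' : Polynomial ℤ) * w' * v i) :=
                fun i _ => by ring
              rw [mul_add, Finset.mul_sum, Finset.sum_congr rfl e1,
                Finset.sum_congr rfl e2, Finset.sum_add_distrib]
              ring

lemma lattice_step {n : ℕ} {ι : Type*} [Fintype ι] (w : ι → Fin n → ℤ) (t : Fin n → ℤ)
    {β : ℝ} (hβ1 : 1 ≤ β) (hβ : ∀ j, Real.sqrt (∑ i, ((w j i : ℝ)) ^ 2) ≤ β)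
    (hsp : (fun i => (t i : ℚ)) ∈ Submodule.span ℚ (Set.range fun j => fun i => ((w j i : ℚ)))) :
    ∃ a : ℤ, a ≠ 0 ∧ ((a.natAbs : ℝ)) ≤ β ^ n ∧
      ∃ c : ι → ℤ, ∀ i, a * t i = ∑ j, c j * w j i := by
  classical
  have hβ0 : (0:ℝ) ≤ β := le_trans zero_le_one hβ1
  by_cases hι : Nonempty ι
  case neg =>
    -- no generators: t must be 0
    have hrange : (Set.range fun j => fun i => ((w j i : ℚ))) = ∅ := by
      rw [Set.range_eq_empty_iff]; exact not_nonempty_iff.1 hι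
    rw [hrange, Submodule.span_empty, Submodule.mem_bot] at hsp
    refine ⟨1, one_ne_zero, by simpa using one_le_pow₀ hβ1, fun _ => 0, fun i => ?_⟩
    have : (t i : ℚ) = 0 := congrFun hsp i
    have ht : t i = 0 := by exact_mod_cast this
    simp [ht]
  case pos =>
  set wQ : ι → (Fin n → ℚ) := fun j i => (w j i : ℚ) with hwQ
  set tQ : Fin n → ℚ := fun i => (t i : ℚ) with htQ
  obtain ⟨s, hs_sub, hs_span, hs_li⟩ := exists_linearIndependent ℚ (Set.range wQ)
  replace hs_li : LinearIndepOn ℚ id s := hs_li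
  have hsub : s ⊆ s ∪ Set.range (Pi.basisFun ℚ (Fin n)) := Set.subset_union_left
  set b : Set (Fin n → ℚ) := hs_li.extend hsub with hb
  have hb_sub : b ⊆ s ∪ Set.range (Pi.basisFun ℚ (Fin n)) := hs_li.extend_subset hsub
  have hs_b : s ⊆ b := hs_li.subset_extend hsub
  have hb_li : LinearIndependent ℚ ((↑) : b → (Fin n → ℚ)) := hs_li.linearIndepOn_extend hsub
  have hb_span : ⊤ ≤ Submodule.span ℚ (Set.range ((↑) : b → (Fin n → ℚ))) := by
    rw [Subtype.range_coe]
    have h1 : Set.range (Pi.basisFun ℚ (Fin n)) ⊆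
        ↑(Submodule.span ℚ b) := fun x hx =>
      hs_li.subset_span_extend hsub (Set.mem_union_right _ hx)
    intro x _
    have htop : Submodule.span ℚ (Set.range (Pi.basisFun ℚ (Fin n))) = ⊤ :=
      (Pi.basisFun ℚ (Fin n)).span_eq
    have : x ∈ Submodule.span ℚ (Set.range (Pi.basisFun ℚ (Fin n))) := by
      rw [htop]; trivial
    exact Submodule.span_le.2 h1 this
  set B : Module.Basis b ℚ (Fin n → ℚ) := Module.Basis.mk hb_li hb_span with hB
  have hb_fin : b.Finite := by
    refine Set.Finite.subset (Set.Finite.union ((Set.finite_range wQ).subset hs_sub)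
      (Set.finite_range (Pi.basisFun ℚ (Fin n)))) hb_sub
  haveI : Fintype b := hb_fin.fintype
  have hcard : Fintype.card b = n := by
    have h1 := Module.finrank_eq_card_basis B
    rw [Module.finrank_pi ℚ] at h1
    simpa using h1.symm
  set eb : b ≃ Fin n := Fintype.equivFinOfCardEq hcard with heb
  -- integral representatives
  have hint : ∀ u : b, ∃ zz : Fin n → ℤ, ((fun i => (zz i : ℚ)) = (u : Fin n → ℚ)) ∧
      Real.sqrt (∑ i, ((zz i : ℝ)) ^ 2) ≤ β ∧
      ((u : Fin n → ℚ) ∈ s → ∃ j, zz = w j) := by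
    intro u
    by_cases hus : (u : Fin n → ℚ) ∈ s
    · obtain ⟨j, hj⟩ := hs_sub hus
      exact ⟨w j, hj, hβ j, fun _ => ⟨j, rfl⟩⟩
    · have hustd : (u : Fin n → ℚ) ∈ Set.range (Pi.basisFun ℚ (Fin n)) := by
        rcases hb_sub u.2 with h | h
        · exact absurd h hus
        · exact h
      obtain ⟨i0, hi0⟩ := hustd
      refine ⟨fun i => if i = i0 then (1:ℤ) else 0, ?_, ?_, fun h => absurd h hus⟩
      · funext i
        rw [← hi0]
        simp [Pi.basisFun_apply, Pi.single_apply, apply_ite (fun (x : ℤ) => (x : ℚ))]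
      · have heval : ∑ i, (((if i = i0 then (1:ℤ) else 0) : ℤ) : ℝ) ^ 2 = 1 := by
          rw [Finset.sum_eq_single i0]
          · simp
          · intro i _ hii0; simp [hii0]
          · intro habs; exact absurd (Finset.mem_univ i0) habs
        rw [heval, Real.sqrt_one]
        exact hβ1
  choose z hzcast hznorm hzw using hint
  -- the matrices
  set M0 : Matrix (Fin n) (Fin n) ℤ := fun i k => z (eb.symm k) i with hM0
  set M : Matrix (Fin n) (Fin n) ℚ := M0.map (Int.cast : ℤ → ℚ) with hM
  set B' : Module.Basis (Fin n) ℚ (Fin n → ℚ) := B.reindex eb with hB'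
  have hB'co : ∀ k, B' k = ((eb.symm k : Fin n → ℚ)) := by
    intro k
    rw [hB', Module.Basis.reindex_apply, hB, Module.Basis.coe_mk]
  have hMtm : M = (Pi.basisFun ℚ (Fin n)).toMatrix B' := by
    ext i k
    rw [Module.Basis.toMatrix_apply, Pi.basisFun_repr, hB'co k]
    exact (congrFun (hzcast (eb.symm k)) i)
  have hMdet : M.det ≠ 0 := by
    rw [hMtm]
    haveI := (Pi.basisFun ℚ (Fin n)).invertibleToMatrix B'
    exact (Matrix.isUnit_det_of_invertible _).ne_zero
  set a : ℤ := M0.det with ha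
  have haQ : (a : ℚ) = M.det := by
    rw [ha, hM]
    exact RingHom.map_det (Int.castRingHom ℚ) M0
  have ha0 : a ≠ 0 := by
    intro h
    apply hMdet
    rw [← haQ, h, Int.cast_zero]
  -- Hadamard bound
  have habound : ((a.natAbs : ℝ)) ≤ β ^ n := by
    have h1 : ((a.natAbs : ℝ)) = |((a : ℝ))| := by
      rw [Nat.cast_natAbs, Int.cast_abs]
    have h2 : ((a : ℝ)) = (M0.map (Int.cast : ℤ → ℝ)).det := by
      rw [ha]
      exact RingHom.map_det (Int.castRingHom ℝ) M0
    rw [h1, h2]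
    refine (hadamard_ineq _).trans ?_
    calc ∏ k, Real.sqrt (∑ i, ((M0.map (Int.cast : ℤ → ℝ)) i k) ^ 2)
        ≤ ∏ _k : Fin n, β := by
          apply Finset.prod_le_prod
          · intro k _; exact Real.sqrt_nonneg _
          · intro k _
            exact hznorm (eb.symm k)
      _ = β ^ n := by rw [Finset.prod_const, Finset.card_univ, Fintype.card_fin]
  -- coordinates of t
  set y : Fin n → ℚ := fun k => B'.repr tQ k with hy
  have hMy : M.mulVec y = tQ := by
    funext i
    have hsum := B'.sum_repr tQ
    calc M.mulVec y i = ∑ k, M i k * y k := by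
          rw [Matrix.mulVec, dotProduct]
      _ = ∑ k, (B'.repr tQ k • B' k) i := by
          apply Finset.sum_congr rfl
          intro k _
          rw [Pi.smul_apply, smul_eq_mul, hMtm, Module.Basis.toMatrix_apply, Pi.basisFun_repr]
          ring
      _ = (∑ k, B'.repr tQ k • B' k) i := by rw [Finset.sum_apply]
      _ = tQ i := by rw [hsum]
  -- Cramer's rule
  have hcramer : M.det • y = M.adjugate.mulVec tQ := by
    rw [← hMy, Matrix.mulVec_mulVec, Matrix.adjugate_mul, Matrix.smul_mulVec,
      Matrix.one_mulVec]
  set c0 : Fin n → ℤ := M0.adjugate.mulVec t with hc0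
  have hc0Q : ∀ k, ((c0 k : ℚ)) = (a : ℚ) * y k := by
    intro k
    have h1 : ((c0 k : ℚ)) = (M.adjugate.mulVec tQ) k := by
      rw [hc0, Matrix.mulVec, dotProduct, Matrix.mulVec, dotProduct]
      push_cast
      apply Finset.sum_congr rfl
      intro l _
      congr 1
      have hadj : M0.adjugate.map (Int.cast : ℤ → ℚ) = (M0.map (Int.cast : ℤ → ℚ)).adjugate :=
        RingHom.map_adjugate (Int.castRingHom ℚ) M0
      rw [hM, ← hadj]
      rfl
    rw [h1, ← hcramer]
    simp [haQ]
  -- vanishing of coordinates outside s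
  have hvanish : ∀ k, ((eb.symm k : Fin n → ℚ)) ∉ s → y k = 0 := by
    intro k hk
    set s' : Set b := ((↑) : b → (Fin n → ℚ)) ⁻¹' s with hs'
    have himg : ((↑) : b → (Fin n → ℚ)) '' s' = s := by
      rw [hs', Subtype.image_preimage_coe, Set.inter_eq_self_of_subset_right hs_b]
    have htmem : tQ ∈ Submodule.span ℚ (⇑B '' s') := by
      rw [hB, Module.Basis.coe_mk, himg, hs_span]
      exact hsp
    obtain ⟨l, hl_supp, hl_total⟩ :=
      (Finsupp.mem_span_image_iff_linearCombination ℚ).1 htmem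
    have hrepr : B.repr tQ = l := by
      rw [← hl_total, Module.Basis.repr_linearCombination]
    have hyk : y k = B.repr tQ (eb.symm k) := by
      simp only [hy, hB']
      rw [Module.Basis.repr_reindex_apply]
    rw [hyk, hrepr]
    apply Finsupp.notMem_support_iff.1
    intro hmem
    exact hk (hl_supp hmem)
  -- assemble the integer combination
  have hTs : ∀ k : Fin n, y k ≠ 0 → ∃ j, z (eb.symm k) = w j := by
    intro k hk
    apply hzw
    by_contra hns
    exact hk (hvanish k hns)
  choose! jsel hjsel using hTs
  have hc0zero : ∀ k, y k = 0 → c0 k = 0 := by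
    intro k hk
    have := hc0Q k
    rw [hk, mul_zero] at this
    exact_mod_cast this
  -- main identity over ℚ
  have hmainQ : ∀ i, (a : ℚ) * tQ i = ∑ k, ((c0 k : ℚ)) * M i k := by
    intro i
    calc (a : ℚ) * tQ i = (a : ℚ) * (M.mulVec y) i := by rw [hMy]
      _ = ∑ k, ((a : ℚ) * y k) * M i k := by
          rw [Matrix.mulVec, dotProduct, Finset.mul_sum]
          apply Finset.sum_congr rfl
          intro k _; ring
      _ = ∑ k, ((c0 k : ℚ)) * M i k := by
          apply Finset.sum_congr rfl
          intro k _
          rw [hc0Q k]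
  have hmain : ∀ i, a * t i = ∑ k, c0 k * z (eb.symm k) i := by
    intro i
    have := hmainQ i
    have hM' : ∀ k, M i k = ((z (eb.symm k) i : ℚ)) := fun k => rfl
    apply @Int.cast_injective ℚ _ _
    push_cast
    rw [this]
    apply Finset.sum_congr rfl
    intro k _
    rw [hM' k]
  refine ⟨a, ha0, habound, fun j => ∑ k ∈ Finset.univ.filter (fun k => jsel k = j), c0 k, ?_⟩
  intro i
  rw [hmain i]
  have hstep : ∀ k, c0 k * z (eb.symm k) i = c0 k * w (jsel k) i := by
    intro k
    by_cases hk : y k = 0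
    · rw [hc0zero k hk, zero_mul, zero_mul]
    · rw [hjsel k hk]
  rw [Finset.sum_congr rfl (fun k _ => hstep k)]
  rw [← Finset.sum_fiberwise_of_maps_to (g := jsel) (fun k _ => Finset.mem_univ (jsel k))
    (fun k => c0 k * w (jsel k) i)]
  apply Finset.sum_congr rfl
  intro j _
  rw [Finset.sum_mul]
  apply Finset.sum_congr rfl
  intro k hk
  rw [(Finset.mem_filter.1 hk).2]

lemma exists_integer_in_ideal {m d : ℕ} (hd1 : 1 ≤ d) (f : Fin m → Polynomial ℤ)
    (hd : ∀ i, (f i).natDegree ≤ d) {h : ℝ} (hh0 : 0 ≤ h)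
    (hc : ∀ i k, |(((f i).coeff k : ℝ))| ≤ Real.exp h)
    (h1 : (1 : Polynomial ℤ) ∈ Ideal.span (Set.range f)) :
    ∃ a : ℤ, a ≠ 0 ∧ ((a.natAbs : ℝ)) ≤ ((d : ℝ) + 1) ^ d * Real.exp h ^ (2 * d) ∧
      ∃ p : Fin m → Polynomial ℤ, (∀ i, (p i).natDegree ≤ d - 1) ∧
        C a = ∑ i, f i * p i := by
  classical
  set w : (Fin m × Fin d) → Fin (2 * d) → ℤ :=
    fun jk i => (f jk.1 * X ^ (jk.2 : ℕ)).coeff (i : ℕ) with hw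
  set t : Fin (2 * d) → ℤ := fun i => if (i : ℕ) = 0 then 1 else 0 with ht
  -- rational Bezout
  set φ := Int.castRingHom ℚ with hφ
  set fQ : Fin m → Polynomial ℚ := fun i => (f i).map φ with hfQ
  have h1' : (1 : Polynomial ℚ) ∈ Ideal.span (Set.range fQ) := by
    have hmem := Ideal.mem_map_of_mem (Polynomial.mapRingHom φ) h1
    rw [Ideal.map_span, map_one] at hmem
    have himg : (Polynomial.mapRingHom φ) '' (Set.range f) = Set.range fQ := by
      rw [← Set.range_comp]; rfl
    rwa [himg] at hmem
  obtain ⟨q, hqdeg, hq⟩ := bezout_field hd1 fQ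
    (fun i => natDegree_map_le.trans (hd i)) h1'
  -- the span membership
  have hmem : (fun i : Fin (2 * d) => ((t i : ℚ))) ∈
      Submodule.span ℚ (Set.range fun jk => fun i => ((w jk i : ℚ))) := by
    have hpoly : (1 : Polynomial ℚ) =
        ∑ jk : Fin m × Fin d, ((q jk.1).coeff (jk.2 : ℕ)) • (fQ jk.1 * X ^ (jk.2 : ℕ)) := by
      rw [← hq, Fintype.sum_prod_type]
      apply Finset.sum_congr rfl
      intro i _
      have hqi : q i = ∑ k : Fin d, C ((q i).coeff (k : ℕ)) * X ^ (k : ℕ) := by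
        have hlt : (q i).natDegree < d := by have := hqdeg i; omega
        calc q i = ∑ kk ∈ Finset.range d, (monomial kk) ((q i).coeff kk) :=
              as_sum_range' (q i) d hlt
          _ = ∑ k : Fin d, C ((q i).coeff (k : ℕ)) * X ^ (k : ℕ) := by
              rw [← Fin.sum_univ_eq_sum_range (fun kk => (monomial kk) ((q i).coeff kk)) d]
              apply Finset.sum_congr rfl
              intro k _
              rw [C_mul_X_pow_eq_monomial]
      conv_lhs => rw [hqi]
      rw [Finset.mul_sum]
      apply Finset.sum_congr rfl
      intro k _
      rw [smul_eq_C_mul]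
      ring
    have hvec : (fun i : Fin (2 * d) => ((t i : ℚ))) =
        ∑ jk : Fin m × Fin d, ((q jk.1).coeff (jk.2 : ℕ)) •
          (fun i : Fin (2 * d) => ((w jk i : ℚ))) := by
      funext i
      have h1i : ((t i : ℚ)) = (1 : Polynomial ℚ).coeff (i : ℕ) := by
        rw [ht, coeff_one]
        by_cases h0 : (i : ℕ) = 0 <;> simp [h0]
      rw [h1i]
      conv_lhs => rw [hpoly]
      rw [finset_sum_coeff, Finset.sum_apply]
      apply Finset.sum_congr rfl
      intro jk _
      rw [coeff_smul, Pi.smul_apply, smul_eq_mul, smul_eq_mul]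
      congr 1
      have hmapmul : fQ jk.1 * X ^ (jk.2 : ℕ) = ((f jk.1 * X ^ (jk.2 : ℕ)).map φ) := by
        rw [Polynomial.map_mul, Polynomial.map_pow, map_X]
      rw [hmapmul, coeff_map]
      rfl
    rw [hvec]
    apply Submodule.sum_mem
    intro jk _
    exact Submodule.smul_mem _ _ (Submodule.subset_span ⟨jk, rfl⟩)
  -- column norm bounds
  set β : ℝ := Real.sqrt ((d : ℝ) + 1) * Real.exp h with hβdef
  have hβ1 : 1 ≤ β := by
    have h1' : (1 : ℝ) ≤ Real.sqrt ((d : ℝ) + 1) := by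
      have hs := Real.sq_sqrt (show (0:ℝ) ≤ (d:ℝ) + 1 by positivity)
      have hnn := Real.sqrt_nonneg ((d:ℝ) + 1)
      have hd0 : (0:ℝ) ≤ (d:ℝ) := Nat.cast_nonneg d
      nlinarith
    have h2' : (1 : ℝ) ≤ Real.exp h := Real.one_le_exp hh0
    calc (1:ℝ) = 1 * 1 := by ring
      _ ≤ Real.sqrt ((d : ℝ) + 1) * Real.exp h := by
          apply mul_le_mul h1' h2' zero_le_one (le_trans zero_le_one h1')
  have hβcol : ∀ jk, Real.sqrt (∑ i, ((w jk i : ℝ)) ^ 2) ≤ β := by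
    intro jk
    have hsum : ∑ i : Fin (2 * d), ((w jk i : ℝ)) ^ 2 ≤ ((d : ℝ) + 1) * Real.exp h ^ 2 := by
      have hpt : ∀ i : Fin (2 * d), ((w jk i : ℝ)) ^ 2 ≤
          (if (jk.2 : ℕ) ≤ (i : ℕ) ∧ (i : ℕ) ≤ (jk.2 : ℕ) + d then Real.exp h ^ 2 else 0) := by
        intro i
        by_cases hin : (jk.2 : ℕ) ≤ (i : ℕ) ∧ (i : ℕ) ≤ (jk.2 : ℕ) + d
        · rw [if_pos hin]
          have : |((w jk i : ℝ))| ≤ Real.exp h := by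
            simp only [hw]
            rw [coeff_mul_X_pow' (f jk.1) (jk.2 : ℕ) (i : ℕ)]
            rw [if_pos hin.1]
            exact hc jk.1 _
          calc ((w jk i : ℝ)) ^ 2 = |((w jk i : ℝ))| ^ 2 := (sq_abs _).symm
            _ ≤ Real.exp h ^ 2 := by
                apply pow_le_pow_left₀ (abs_nonneg _) this
        · rw [if_neg hin]
          have hzero : w jk i = 0 := by
            simp only [hw]
            rw [coeff_mul_X_pow' (f jk.1) (jk.2 : ℕ) (i : ℕ)]
            push_neg at hin
            by_cases hle : (jk.2 : ℕ) ≤ (i : ℕ)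
            · rw [if_pos hle]
              apply coeff_eq_zero_of_natDegree_lt
              have := hd jk.1
              have := hin hle
              omega
            · rw [if_neg hle]
          rw [hzero]
          simp
      calc ∑ i : Fin (2 * d), ((w jk i : ℝ)) ^ 2
          ≤ ∑ i : Fin (2 * d),
            (if (jk.2 : ℕ) ≤ (i : ℕ) ∧ (i : ℕ) ≤ (jk.2 : ℕ) + d then Real.exp h ^ 2 else 0) :=
            Finset.sum_le_sum (fun i _ => hpt i)
        _ = (Finset.univ.filter (fun i : Fin (2 * d) =>
              (jk.2 : ℕ) ≤ (i : ℕ) ∧ (i : ℕ) ≤ (jk.2 : ℕ) + d)).card * Real.exp h ^ 2 := by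
            rw [Finset.sum_ite, Finset.sum_const_zero, add_zero, Finset.sum_const,
              nsmul_eq_mul]
        _ ≤ ((d : ℝ) + 1) * Real.exp h ^ 2 := by
            apply mul_le_mul_of_nonneg_right _ (by positivity)
            have hcardle : (Finset.univ.filter (fun i : Fin (2 * d) =>
                (jk.2 : ℕ) ≤ (i : ℕ) ∧ (i : ℕ) ≤ (jk.2 : ℕ) + d)).card ≤ d + 1 := by
              have hinj : ∀ x ∈ Finset.univ.filter (fun i : Fin (2 * d) =>
                  (jk.2 : ℕ) ≤ (i : ℕ) ∧ (i : ℕ) ≤ (jk.2 : ℕ) + d),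
                  (x : ℕ) ∈ Finset.Icc (jk.2 : ℕ) ((jk.2 : ℕ) + d) := by
                intro x hx
                rw [Finset.mem_filter] at hx
                rw [Finset.mem_Icc]
                exact hx.2
              calc (Finset.univ.filter (fun i : Fin (2 * d) =>
                      (jk.2 : ℕ) ≤ (i : ℕ) ∧ (i : ℕ) ≤ (jk.2 : ℕ) + d)).card
                  ≤ (Finset.Icc (jk.2 : ℕ) ((jk.2 : ℕ) + d)).card :=
                    Finset.card_le_card_of_injOn (fun x => (x : ℕ)) hinj
                      (fun x _ y _ hxy => Fin.ext hxy)
                _ = d + 1 := by rw [Nat.card_Icc]; omega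
            calc ((Finset.univ.filter (fun i : Fin (2 * d) =>
                    (jk.2 : ℕ) ≤ (i : ℕ) ∧ (i : ℕ) ≤ (jk.2 : ℕ) + d)).card : ℝ)
                  ≤ ((d + 1 : ℕ) : ℝ) := by exact_mod_cast hcardle
              _ = (d : ℝ) + 1 := by push_cast; ring
    calc Real.sqrt (∑ i, ((w jk i : ℝ)) ^ 2) ≤
        Real.sqrt (((d : ℝ) + 1) * Real.exp h ^ 2) := Real.sqrt_le_sqrt hsum
      _ = β := by
          rw [Real.sqrt_mul (by positivity), Real.sqrt_sq (Real.exp_pos h).le, hβdef]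
  -- apply the lattice lemma
  obtain ⟨a, ha0, habound, c, hcomb⟩ := lattice_step w t hβ1 hβcol hmem
  have haboundF : ((a.natAbs : ℝ)) ≤ ((d : ℝ) + 1) ^ d * Real.exp h ^ (2 * d) := by
    refine habound.trans ?_
    rw [hβdef, mul_pow]
    apply mul_le_mul_of_nonneg_right _ (by positivity)
    have hss : Real.sqrt ((d : ℝ) + 1) ^ (2 * d) = ((d : ℝ) + 1) ^ d := by
      rw [show 2 * d = d * 2 by ring, pow_mul', Real.sq_sqrt (by positivity)]
    rw [hss]
  -- build the polynomials
  set p : Fin m → Polynomial ℤ := fun i => ∑ k : Fin d, C (c (i, k)) * X ^ (k : ℕ) with hp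
  have hpdeg : ∀ i, (p i).natDegree ≤ d - 1 := by
    intro i
    apply natDegree_sum_le_of_forall_le
    intro k _
    refine natDegree_mul_le.trans ?_
    rw [natDegree_C, natDegree_X_pow]
    have := k.2
    omega
  refine ⟨a, ha0, haboundF, p, hpdeg, ?_⟩
  apply Polynomial.ext
  intro i'
  rw [coeff_C, finset_sum_coeff]
  by_cases hlt : i' < 2 * d
  · have hcombi := hcomb ⟨i', hlt⟩
    have hL : (if i' = 0 then a else 0) = a * t ⟨i', hlt⟩ := by
      rw [ht]
      by_cases h0 : i' = 0 <;> simp [h0]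
    rw [hL, hcombi, Fintype.sum_prod_type]
    apply Finset.sum_congr rfl
    intro i _
    have hexp : f i * p i = ∑ k : Fin d, C (c (i, k)) * (f i * X ^ (k : ℕ)) := by
      rw [hp, Finset.mul_sum]
      apply Finset.sum_congr rfl
      intro k _
      ring
    rw [hexp, finset_sum_coeff]
    apply Finset.sum_congr rfl
    intro k _
    rw [coeff_C_mul]
  · push_neg at hlt
    have h0 : i' ≠ 0 := by omega
    rw [if_neg h0]
    symm
    apply Finset.sum_eq_zero
    intro i _
    apply coeff_eq_zero_of_natDegree_lt
    refine lt_of_le_of_lt (natDegree_mul_le) ?_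
    have hdi := hd i
    have hpi := hpdeg i
    omega

/-- Let f₁,…,f_m ∈ ℤ[x] with d = max deg(f_i) ≥ 1 and h = max height(f_i).
If 1 belongs to the ideal generated by the f_i in ℤ[x], then there exist
h₁,…,h_m ∈ ℤ[x] with deg(h_i) ≤ 3d²(2h + log(d+1)) such that 1 = f₁h₁ + ⋯ + f_m h_m. -/
theorem stmt9 {m : ℕ} (f : Fin m → Polynomial ℤ)
    (d : ℕ) (hd1 : 1 ≤ d) (hd : ∀ i, (f i).natDegree ≤ d)
    (h : ℝ) (hh : ∀ i, polyHeight (f i) ≤ h)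
    (h1 : (1 : Polynomial ℤ) ∈ Ideal.span (Set.range f)) :
    ∃ g : Fin m → Polynomial ℤ,
      (∀ i, ((g i).natDegree : ℝ) ≤ 3 * (d : ℝ) ^ 2 * (2 * h + Real.log ((d : ℝ) + 1))) ∧
      (1 : Polynomial ℤ) = ∑ i, f i * g i := by
  classical
  -- m > 0 and h ≥ 0
  have hm : 0 < m := by
    by_contra hm0
    push_neg at hm0
    have hempty : (Set.range f) = ∅ := by
      rw [Set.range_eq_empty_iff]
      exact ⟨fun i => absurd i.2 (by omega)⟩
    rw [hempty, Ideal.span_empty, Ideal.mem_bot] at h1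
    exact one_ne_zero h1
  have hh0 : 0 ≤ h := le_trans (polyHeight_nonneg _) (hh ⟨0, hm⟩)
  have hcf : ∀ i k, |(((f i).coeff k : ℝ))| ≤ Real.exp h :=
    fun i k => coeff_le_exp_polyHeight (hh i) k
  obtain ⟨a, ha0, habound, p, hpdeg, hpa⟩ := exists_integer_in_ideal hd1 f hd hh0 hcf h1
  have hNa1 : 1 ≤ a.natAbs := Int.natAbs_pos.2 ha0
  obtain ⟨g', w, c, h2c, hg'deg, hwdeg, hrep⟩ := key_induction hd1 f hd h1 a.natAbs hNa1
  obtain ⟨ε, hε1, hεeq⟩ : ∃ ε : ℤ, (ε = 1 ∨ ε = -1) ∧ ((a.natAbs : ℤ)) = ε * a := by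
    rcases Int.natAbs_eq a with h' | h'
    · exact ⟨1, Or.inl rfl, by omega⟩
    · exact ⟨-1, Or.inr rfl, by omega⟩
  set g : Fin m → Polynomial ℤ := fun i => g' i + C ε * p i * w with hg
  have hsum : (1 : Polynomial ℤ) = ∑ i, f i * g i := by
    have hcast : ((a.natAbs : ℕ) : Polynomial ℤ) = C ε * C a := by
      rw [← map_natCast (C : ℤ →+* Polynomial ℤ) a.natAbs, hεeq, C_mul]
    calc (1 : Polynomial ℤ) = ∑ i, f i * g' i + ((a.natAbs : ℕ) : Polynomial ℤ) * w := hrep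
      _ = ∑ i, f i * g' i + ∑ i, f i * (C ε * p i * w) := by
          rw [hcast, hpa, Finset.mul_sum, Finset.sum_mul]
          congr 1
          · apply Finset.sum_congr rfl
            intro i _
            ring
      _ = ∑ i, f i * g i := by
          rw [← Finset.sum_add_distrib]
          apply Finset.sum_congr rfl
          intro i _
          rw [hg]
          ring
  have hgdeg : ∀ i, (g i).natDegree ≤ (d - 1) + (2 * d - 1) * c := by
    intro i
    rw [hg]
    refine (natDegree_add_le _ _).trans ?_
    refine max_le ((hg'deg i).trans (by omega)) ?_
    refine natDegree_mul_le.trans ?_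
    have h1' : (C ε * p i).natDegree ≤ d - 1 :=
      (natDegree_C_mul_le _ _).trans (hpdeg i)
    omega
  refine ⟨g, ?_, hsum⟩
  intro i
  set X : ℝ := 2 * h + Real.log ((d : ℝ) + 1) with hX
  set l : ℝ := Real.log 2 with hl
  have hlgt : (0.6931471803 : ℝ) < l := Real.log_two_gt_d9
  have hlpos : (0 : ℝ) < l := by linarith
  have hd1' : (1 : ℝ) ≤ (d : ℝ) := by exact_mod_cast hd1
  have hc0 : (0 : ℝ) ≤ (c : ℝ) := Nat.cast_nonneg c
  have hXl : l ≤ X := by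
    have hlog : Real.log 2 ≤ Real.log ((d : ℝ) + 1) := by
      apply Real.log_le_log (by norm_num)
      linarith
    rw [hX, hl]
    linarith
  -- c * log 2 ≤ d * X
  have hcl : (c : ℝ) * l ≤ (d : ℝ) * X := by
    have h2c' : ((2 : ℝ)) ^ c ≤ ((a.natAbs : ℕ) : ℝ) := by exact_mod_cast h2c
    have hlogle : Real.log ((2 : ℝ) ^ c) ≤ Real.log ((a.natAbs : ℕ) : ℝ) :=
      Real.log_le_log (by positivity) h2c'
    have hlogup : Real.log ((a.natAbs : ℕ) : ℝ) ≤
        (d : ℝ) * Real.log ((d : ℝ) + 1) + 2 * (d : ℝ) * h := by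
      have hpos : (0 : ℝ) < ((a.natAbs : ℕ) : ℝ) := by
        have : (0 : ℕ) < a.natAbs := hNa1
        exact_mod_cast this
      refine (Real.log_le_log hpos habound).trans ?_
      rw [Real.log_mul (by positivity) (by positivity), Real.log_pow, Real.log_pow,
        Real.log_exp]
      push_cast
      ring_nf
      -- should be equality-ish; finish with linarith
      nlinarith [Real.log_nonneg (show (1:ℝ) ≤ (d:ℝ) + 1 by linarith)]
    rw [Real.log_pow] at hlogle
    have : (c : ℝ) * l ≤ (d : ℝ) * Real.log ((d : ℝ) + 1) + 2 * (d : ℝ) * h :=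
      le_trans hlogle hlogup
    rw [hX]
    nlinarith [this]
  -- final numeric inequality
  have hgc : ((g i).natDegree : ℝ) ≤ (d : ℝ) - 1 + (2 * (d : ℝ) - 1) * (c : ℝ) := by
    have := hgdeg i
    have hcast : (((d - 1) + (2 * d - 1) * c : ℕ) : ℝ)
        = (d : ℝ) - 1 + (2 * (d : ℝ) - 1) * (c : ℝ) := by
      push_cast [Nat.cast_sub hd1, Nat.cast_sub (show 1 ≤ 2 * d by omega)]
      ring
    calc ((g i).natDegree : ℝ) ≤ (((d - 1) + (2 * d - 1) * c : ℕ) : ℝ) := by exact_mod_cast this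
      _ = (d : ℝ) - 1 + (2 * (d : ℝ) - 1) * (c : ℝ) := hcast
  refine hgc.trans ?_
  have h2d1 : (0 : ℝ) ≤ 2 * (d : ℝ) - 1 := by linarith
  have hstep1 : (2 * (d : ℝ) - 1) * ((c : ℝ) * l) ≤ (2 * (d : ℝ) - 1) * ((d : ℝ) * X) :=
    mul_le_mul_of_nonneg_left hcl h2d1
  have hdd : (0 : ℝ) ≤ (d : ℝ) ^ 2 := sq_nonneg _
  have hkey : (0.6931471803 : ℝ) * (d : ℝ) ^ 2 ≤ l * (d : ℝ) ^ 2 :=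
    mul_le_mul_of_nonneg_right hlgt.le hdd
  have hcoef : (0 : ℝ) ≤ (d : ℝ) * (3 * (d : ℝ) * l - 2 * (d : ℝ) + 1) := by nlinarith [hkey, hdd, hd1']
  have hstep2 : (d : ℝ) * (3 * (d : ℝ) * l - 2 * (d : ℝ) + 1) * l ≤
      (d : ℝ) * (3 * (d : ℝ) * l - 2 * (d : ℝ) + 1) * X :=
    mul_le_mul_of_nonneg_left hXl hcoef
  have hcoef2 : (0 : ℝ) ≤ 3 * (d : ℝ) ^ 2 * l - 2 * (d : ℝ) ^ 2 + 1 := by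
    nlinarith [hkey, hdd, hd1']
  have hpos2 : (0 : ℝ) ≤ l * (3 * (d : ℝ) ^ 2 * l - 2 * (d : ℝ) ^ 2 + 1) :=
    mul_nonneg hlpos.le hcoef2
  have hfinal : ((d : ℝ) - 1 + (2 * (d : ℝ) - 1) * (c : ℝ)) * l
      ≤ (3 * (d : ℝ) ^ 2 * X) * l := by linarith [hstep1, hstep2, hpos2]
  exact le_of_mul_le_mul_right hfinal hlpos
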